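/- Let A be a finitely generated unital commutative algebra over an algebraically closed field K of characteristic zero, and let φ: A → K be a nonzero multiplicative polynomial map (φ(ab) = φ(a)φ(b)). Then there exists n ∈ ℕ with φ(z·1) = z^n for all z ∈ K, and there exist algebra homomorphisms χ₁, …, χₙ : A → K such that φ = χ₁ ⋯ χₙ (pointwise product). -/

import Mathlib

open MvPolynomial in
private lemma prod_X_eq_monomial {K : Type*} [CommSemiring K] {n : ℕ} (r : Fin n → Fin n)
    (s : Finset (Fin n)) :
    (∏ i ∈ s, (X (r i) : MvPolynomial (Fin n) K))
      = monomial (∑ i ∈ s, Finsupp.single (r i) 1) 1 := by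
  classical
  induction s using Finset.induction_on with
  | empty => simp
  | insert _ _ ha ih =>
    rw [Finset.prod_insert ha, Finset.sum_insert ha, ih, X, monomial_mul, one_mul]

private lemma deg_eq_iff {n : ℕ} (r : Fin n → Fin n) :
    (∑ i, Finsupp.single (r i) (1 : ℕ)) = (∑ i, Finsupp.single i 1) ↔ Function.Bijective r := by
  classical
  constructor
  · intro h
    rw [← Finite.surjective_iff_bijective]
    intro j
    by_contra hj
    push_neg at hj
    have h1 := congrArg (fun d => d j) h
    simp only [Finsupp.finset_sum_apply, Finsupp.single_apply] at h1
    rw [Finset.sum_ite_eq' Finset.univ j (fun _ => 1)] at h1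
    simp only [Finset.mem_univ, if_true] at h1
    rw [Finset.sum_eq_zero (fun i _ => by simp [hj i])] at h1
    exact zero_ne_one h1
  · intro h
    exact Fintype.sum_bijective r h _ _ (fun i => rfl)

private lemma symm_diag_zero {K A : Type*} [Field K] [CharZero K]
    [AddCommGroup A] [Module K A] {n : ℕ}
    (L : MultilinearMap K (fun _ : Fin n => A) K)
    (hsymm : ∀ (σ : Equiv.Perm (Fin n)) (v : Fin n → A), L (fun i => v (σ i)) = L v)
    (hdiag : ∀ a : A, L (fun _ => a) = 0) (v : Fin n → A) : L v = 0 := by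
  classical
  have hexp : ∀ t : Fin n → K,
      ∑ r : Fin n → Fin n, (∏ i, t (r i)) * L (fun i => v (r i)) = 0 := by
    intro t
    have h0 := hdiag (∑ j, t j • v j)
    have h1 : L (fun _ => ∑ j, t j • v j) = ∑ r : Fin n → Fin n, L (fun i => t (r i) • v (r i)) :=
      L.map_sum (fun (_ : Fin n) (j : Fin n) => t j • v j)
    rw [h1] at h0
    rw [← h0]
    refine Finset.sum_congr rfl fun r _ => ?_
    rw [L.map_smul_univ (fun i => t (r i)) (fun i => v (r i))]
    simp
  -- build the MvPolynomial
  set m₀ : Fin n →₀ ℕ := ∑ i, Finsupp.single i 1 with hm₀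
  set P : MvPolynomial (Fin n) K :=
    ∑ r : Fin n → Fin n, MvPolynomial.C (L (fun i => v (r i))) * ∏ i, MvPolynomial.X (r i) with hP
  have hPzero : P = 0 := by
    apply MvPolynomial.funext
    intro t
    rw [hP, map_sum, map_zero]
    rw [← hexp t]
    refine Finset.sum_congr rfl fun r _ => ?_
    simp [mul_comm]
  have hcoeff := congrArg (MvPolynomial.coeff m₀) hPzero
  rw [hP, MvPolynomial.coeff_zero] at hcoeff
  rw [MvPolynomial.coeff_sum] at hcoeff
  have hterm : ∀ r : Fin n → Fin n,
      MvPolynomial.coeff m₀ (MvPolynomial.C (L (fun i => v (r i))) * ∏ i, MvPolynomial.X (r i))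
      = if Function.Bijective r then L v else 0 := by
    intro r
    rw [prod_X_eq_monomial r Finset.univ, MvPolynomial.coeff_C_mul,
      MvPolynomial.coeff_monomial]
    by_cases hb : Function.Bijective r
    · rw [if_pos ((deg_eq_iff r).2 hb), if_pos hb, mul_one]
      exact hsymm (Equiv.ofBijective r hb) v
    · rw [if_neg (fun hh => hb ((deg_eq_iff r).1 hh)), if_neg hb, mul_zero]
  rw [Finset.sum_congr rfl (fun r _ => hterm r)] at hcoeff
  rw [Finset.sum_ite, Finset.sum_const, Finset.sum_const_zero, add_zero] at hcoeff
  have hcard : (Finset.filter (fun r : Fin n → Fin n => Function.Bijective r) Finset.univ).card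
      = n.factorial := by
    have h4 : (Finset.filter (fun r : Fin n → Fin n => Function.Bijective r) Finset.univ).card
        = (Finset.univ : Finset (Equiv.Perm (Fin n))).card := by
      refine (Finset.card_bij (fun (σ : Equiv.Perm (Fin n)) _ => (σ : Fin n → Fin n)) ?_ ?_ ?_).symm
      · intro σ _; exact Finset.mem_filter.2 ⟨Finset.mem_univ _, σ.bijective⟩
      · intro σ _ τ _ hh; exact Equiv.coe_fn_injective hh
      · intro r hr
        obtain ⟨-, hb⟩ := Finset.mem_filter.1 hr
        exact ⟨Equiv.ofBijective r hb, Finset.mem_univ _, rfl⟩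
    rw [h4, ← Fintype.card, Fintype.card_perm, Fintype.card_fin]
  rw [hcard] at hcoeff
  have hne : ((n.factorial : K)) ≠ 0 := by
    exact_mod_cast Nat.cast_ne_zero.2 n.factorial_ne_zero
  rw [nsmul_eq_mul] at hcoeff
  exact (mul_eq_zero.1 hcoeff).resolve_left hne


open Polynomial in
private lemma coeff_range_sum {K : Type*} [Semiring K] (m : ℕ) (f : ℕ → K) (k : ℕ) :
    (∑ i ∈ Finset.range m, C (f i) * X ^ i).coeff k = if k < m then f k else 0 := by
  rw [Polynomial.finset_sum_coeff]
  simp only [Polynomial.coeff_C_mul, Polynomial.coeff_X_pow, mul_ite, mul_one, mul_zero]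
  rw [Finset.sum_ite_eq]
  simp [Finset.mem_range]

private lemma vec_poly_zero {K V : Type*} [Field K] [Infinite K] [AddCommGroup V] [Module K V]
    (m : ℕ) (w : ℕ → V) (h : ∀ t : K, ∑ j ∈ Finset.range m, t ^ j • w j = 0) :
    ∀ j, j < m → w j = 0 := by
  intro j hj
  rw [← Module.forall_dual_apply_eq_zero_iff K]
  intro f
  have hp : ∀ t : K, Polynomial.eval t (∑ i ∈ Finset.range m, Polynomial.C (f (w i)) * Polynomial.X ^ i)
      = Polynomial.eval t (0 : Polynomial K) := by
    intro t
    have h2 := congrArg f (h t)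
    simp only [map_sum, map_smul, map_zero, smul_eq_mul] at h2
    rw [Polynomial.eval_zero, Polynomial.eval_finset_sum]
    rw [← h2]
    refine Finset.sum_congr rfl fun i _ => ?_
    rw [Polynomial.eval_mul, Polynomial.eval_C, Polynomial.eval_pow, Polynomial.eval_X, mul_comm]
  have h3 := Polynomial.funext hp
  have hc := congrArg (fun p => Polynomial.coeff p j) h3
  simpa [coeff_range_sum, hj] using hc

open scoped TensorProduct in
open PiTensorProduct in
set_option maxHeartbeats 2000000 in
set_option synthInstance.maxHeartbeats 400000 in
private lemma exists_chars {K A : Type*} [Field K] [IsAlgClosed K] [CharZero K]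
    [CommRing A] [Algebra K A] (φ : A → K) {n : ℕ}
    (G : MultilinearMap K (fun _ : Fin n => A) K)
    (hGdiag : ∀ a, G (fun _ => a) = φ a)
    (hstar : ∀ (b : A) (v : Fin n → A), G (fun i => v i * b) = G v * φ b)
    (hφ1 : φ 1 = 1) :
    ∃ χ : Fin n → (A →ₐ[K] K), ∀ a : A, φ a = ∏ i, χ i a := by
  classical
  let Λ : (⨂[K] (_ : Fin n), A) →ₗ[K] K := PiTensorProduct.lift G
  have hΛt : ∀ v : Fin n → A, Λ (tprod K v) = G v := fun v => PiTensorProduct.lift.tprod v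
  have hΛ1 : Λ 1 = 1 := by
    rw [PiTensorProduct.one_def, hΛt]
    exact (hGdiag 1).trans hφ1
  have hstar' : ∀ (x : ⨂[K] (_ : Fin n), A) (b : A),
      Λ (x * tprod K (fun _ => b)) = Λ x * φ b := by
    intro x b
    induction x using PiTensorProduct.induction_on with
    | smul_tprod r v =>
      rw [smul_mul_assoc, map_smul, map_smul, tprod_mul_tprod, hΛt, hΛt]
      have : (fun i => v i * b) = (v * fun _ => b) := rfl
      rw [← this, hstar b v, smul_eq_mul, smul_eq_mul, mul_assoc]
    | add x y hx hy => rw [add_mul, map_add, map_add, hx, hy, add_mul]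
  set Dset : Set (⨂[K] (_ : Fin n), A) :=
    Set.range (fun b : A => tprod K (fun _ : Fin n => b)) with hDset
  set D : Subalgebra K (⨂[K] (_ : Fin n), A) := Algebra.adjoin K Dset with hD
  have hdiagmem : ∀ b : A, tprod K (fun _ : Fin n => b) ∈ D :=
    fun b => Algebra.subset_adjoin ⟨b, rfl⟩
  have hΛD : ∀ d ∈ D, (∀ x, Λ (x * d) = Λ x * Λ d) := by
    intro d hd
    induction hd using Algebra.adjoin_induction with
    | mem d hd =>
      obtain ⟨b, rfl⟩ := hd
      intro x
      rw [hstar' x b, hΛt, hGdiag]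
    | algebraMap r =>
      intro x
      rw [Algebra.algebraMap_eq_smul_one, mul_smul_comm, mul_one, map_smul, map_smul,
        smul_eq_mul, smul_eq_mul, hΛ1, mul_one, mul_comm]
    | add p q hp hq ihp ihq =>
      intro x
      rw [mul_add, map_add, map_add, ihp x, ihq x, mul_add]
    | mul p q hp hq ihp ihq =>
      intro x
      rw [← mul_assoc, ihq (x * p), ihp x, ihq p, ← ihq p, ihq p, mul_assoc]
  -- single tensors and products
  have hprod_single : ∀ v : Fin n → A,
      (∏ i, (PiTensorProduct.singleAlgHom (R := K) (A := fun _ : Fin n => A) i (v i)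
        : ⨂[K] (_ : Fin n), A)) = tprod K v := by
    intro v
    have h1 : ∀ i : Fin n, (PiTensorProduct.singleAlgHom (R := K) (A := fun _ : Fin n => A) i (v i)
        : ⨂[K] (_ : Fin n), A) = tprodMonoidHom K (Pi.mulSingle i (v i)) := fun _ => rfl
    rw [Finset.prod_congr rfl (fun i _ => h1 i), ← map_prod, Finset.univ_prod_mulSingle]
    rfl
  clear_value D
  clear hD hDset
  haveI hBnt : Nontrivial (⨂[K] (_ : Fin n), A) := by
    refine nontrivial_of_ne 1 0 fun h => ?_
    rw [h, map_zero] at hΛ1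
    exact one_ne_zero hΛ1.symm
  -- the single-slot embeddings
  set sA : Fin n → (A →ₐ[K] (⨂[K] (_ : Fin n), A)) :=
    fun i => PiTensorProduct.singleAlgHom (R := K) (A := fun _ : Fin n => A) i with hsA
  -- integrality of the single-slot elements over D
  have hint : ∀ (a : A) (i : Fin n), IsIntegral D (sA i a) := by
    intro a i
    set q : Polynomial (⨂[K] (_ : Fin n), A) :=
      ∏ j : Fin n, (Polynomial.X - Polynomial.C (sA j a)) with hq
    have hqmonic : q.Monic :=
      Polynomial.monic_prod_of_monic _ _ (fun j _ => Polynomial.monic_X_sub_C _)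
    have hqdeg : q.natDegree = n := by
      rw [hq, Polynomial.natDegree_prod_of_monic _ _ (fun j _ => Polynomial.monic_X_sub_C _)]
      rw [Finset.sum_congr rfl (fun j _ => Polynomial.natDegree_X_sub_C (sA j a))]
      simp
    have heval : ∀ t : K, q.eval (algebraMap K _ t)
        = tprod K (fun _ : Fin n => t • (1 : A) - a) := by
      intro t
      rw [hq, Polynomial.eval_prod]
      have h2 : ∀ j : Fin n, ((Polynomial.X - Polynomial.C (sA j a)).eval (algebraMap K _ t))
          = sA j (t • (1 : A) - a) := by
        intro j
        rw [Polynomial.eval_sub, Polynomial.eval_X, Polynomial.eval_C, map_sub,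
          Algebra.smul_def, mul_one, AlgHom.commutes]
      rw [Finset.prod_congr rfl (fun j _ => h2 j)]
      exact hprod_single _
    have hcoeffD : ∀ j, q.coeff j ∈ D := by
      have h3 : ∀ t : K, q.eval (algebraMap K _ t)
          = ∑ j ∈ Finset.range (n + 1), t ^ j • q.coeff j := by
        intro t
        rw [Polynomial.eval_eq_sum_range' (lt_of_le_of_lt hqdeg.le (Nat.lt_succ_self n))]
        refine Finset.sum_congr rfl fun j _ => ?_
        rw [← map_pow, mul_comm, ← Algebra.smul_def]
      have hmem : ∀ t : K, (∑ j ∈ Finset.range (n + 1), t ^ j • q.coeff j)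
          ∈ Subalgebra.toSubmodule D := by
        intro t
        rw [← h3 t, heval t]
        exact hdiagmem _
      have hvz := vec_poly_zero (K := K) (n + 1)
        (fun j => (Subalgebra.toSubmodule D).mkQ (q.coeff j))
        (fun t => by
          have h4 : ∀ j ∈ Finset.range (n + 1),
              t ^ j • (Subalgebra.toSubmodule D).mkQ (q.coeff j)
              = (Subalgebra.toSubmodule D).mkQ (t ^ j • q.coeff j) :=
            fun j _ => (map_smul _ _ _).symm
          rw [Finset.sum_congr rfl h4, ← map_sum, Submodule.mkQ_apply,
            Submodule.Quotient.mk_eq_zero]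
          exact hmem t)
      intro j
      rcases lt_or_ge j (n + 1) with hj | hj
      · have h5 := hvz j hj
        simp only [Submodule.mkQ_apply, Submodule.Quotient.mk_eq_zero] at h5
        exact h5
      · have h9 : q.natDegree < j := by omega
        rw [Polynomial.coeff_eq_zero_of_natDegree_lt h9]
        exact zero_mem _
    have hqn : q.coeff n = 1 := by
      have h8 := hqmonic.coeff_natDegree
      rw [hqdeg] at h8
      exact h8
    -- the monic polynomial over D
    refine ⟨∑ j ∈ Finset.range (n + 1), Polynomial.C (⟨q.coeff j, hcoeffD j⟩ : D)
      * Polynomial.X ^ j, ?_, ?_⟩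
    · -- Monic
      have hc : ∀ k, (∑ j ∈ Finset.range (n + 1), Polynomial.C (⟨q.coeff j, hcoeffD j⟩ : D)
          * Polynomial.X ^ j).coeff k = if k < n + 1 then (⟨q.coeff k, hcoeffD k⟩ : D) else 0 :=
        coeff_range_sum (n + 1) _
      have hd1 : (∑ j ∈ Finset.range (n + 1), Polynomial.C (⟨q.coeff j, hcoeffD j⟩ : D)
          * Polynomial.X ^ j).natDegree = n := by
        refine le_antisymm (Polynomial.natDegree_le_iff_coeff_eq_zero.2 fun N hN => ?_)
          (Polynomial.le_natDegree_of_ne_zero ?_)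
        · rw [hc N, if_neg (by omega)]
        · rw [hc n, if_pos (Nat.lt_succ_self n)]
          intro h
          have h7 : q.coeff n = (0 : ⨂[K] (_ : Fin n), A) := congrArg Subtype.val h
          rw [hqn] at h7
          exact one_ne_zero h7
      show Polynomial.leadingCoeff _ = 1
      rw [Polynomial.leadingCoeff, hd1, hc n, if_pos (Nat.lt_succ_self n)]
      exact Subtype.ext hqn
    · -- evaluation is zero
      rw [Polynomial.eval₂_finset_sum]
      have h6 : ∀ j ∈ Finset.range (n + 1),
          Polynomial.eval₂ (algebraMap D _) (sA i a)
            (Polynomial.C (⟨q.coeff j, hcoeffD j⟩ : D) * Polynomial.X ^ j)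
          = q.coeff j * (sA i a) ^ j := by
        intro j _
        rw [Polynomial.eval₂_mul, Polynomial.eval₂_C, Polynomial.eval₂_X_pow]
        rfl
      rw [Finset.sum_congr rfl h6,
        ← Polynomial.eval_eq_sum_range' (lt_of_le_of_lt hqdeg.le (Nat.lt_succ_self n)), hq,
        Polynomial.eval_prod]
      exact Finset.prod_eq_zero (Finset.mem_univ i)
        (by rw [Polynomial.eval_sub, Polynomial.eval_X, Polynomial.eval_C, sub_self])
  haveI hIntD : Algebra.IsIntegral D (⨂[K] (_ : Fin n), A) := by
    refine ⟨fun x => ?_⟩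
    have hx : x ∈ integralClosure D (⨂[K] (_ : Fin n), A) := by
      induction x using PiTensorProduct.induction_on with
      | smul_tprod r v =>
        have h1 : tprod K v ∈ integralClosure D (⨂[K] (_ : Fin n), A) := by
          rw [← hprod_single v]
          exact Subalgebra.prod_mem _ (fun i _ => hint (v i) i)
        have h2 : (algebraMap K (⨂[K] (_ : Fin n), A) r)
            ∈ integralClosure D (⨂[K] (_ : Fin n), A) := by
          have h3 : IsIntegral D (algebraMap D (⨂[K] (_ : Fin n), A)
              ⟨algebraMap K _ r, D.algebraMap_mem r⟩) := isIntegral_algebraMap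
          exact h3
        rw [Algebra.smul_def]
        exact Subalgebra.mul_mem _ h2 h1
      | add x y hx hy => exact Subalgebra.add_mem _ hx hy
    exact hx
  let ρ : D →ₐ[K] K :=
    { toFun := fun d => Λ d.1
      map_one' := hΛ1
      map_mul' := fun p q => hΛD q.1 q.2 p.1
      map_zero' := map_zero Λ
      map_add' := fun p q => map_add Λ p.1 q.1
      commutes' := fun r => by
        show Λ (algebraMap K _ r) = algebraMap K K r
        rw [Algebra.algebraMap_eq_smul_one, map_smul, hΛ1, smul_eq_mul, mul_one,
          Algebra.algebraMap_self_apply] }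
  have hρs : Function.Surjective ρ := fun r =>
    ⟨algebraMap K D r, by rw [AlgHom.commutes, Algebra.algebraMap_self_apply]⟩
  set J : Ideal D := RingHom.ker ρ.toRingHom with hJ
  haveI hJmax : J.IsMaximal := RingHom.ker_isMaximal_of_surjective ρ hρs
  have hker : RingHom.ker (algebraMap D (⨂[K] (_ : Fin n), A)) ≤ J := by
    intro x hx
    rw [RingHom.mem_ker] at hx
    have hx0 : x = 0 := Subtype.ext hx
    rw [hx0]
    exact zero_mem _
  obtain ⟨Q, hQmax, hQcomap⟩ :=
    Ideal.exists_ideal_over_maximal_of_isIntegral (S := ⨂[K] (_ : Fin n), A) J hker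
  haveI := hQmax
  haveI := hQmax.isPrime
  have hmkd : ∀ d : D, Ideal.Quotient.mk Q d.1
      = algebraMap K ((⨂[K] (_ : Fin n), A) ⧸ Q) (ρ d) := by
    intro d
    have h1 : d - algebraMap K D (ρ d) ∈ J := by
      rw [hJ, RingHom.mem_ker, map_sub]
      have : ρ.toRingHom (algebraMap K D (ρ d)) = ρ d := by
        show ρ (algebraMap K D (ρ d)) = ρ d
        rw [AlgHom.commutes, Algebra.algebraMap_self_apply]
      rw [this, sub_eq_zero]
      rfl
    rw [← hQcomap, Ideal.mem_comap] at h1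
    have h2 : (algebraMap D (⨂[K] (_ : Fin n), A)) (d - algebraMap K D (ρ d))
        = d.1 - algebraMap K _ (ρ d) := by
      rw [map_sub]
      rfl
    rw [h2] at h1
    rw [← Ideal.Quotient.mk_algebraMap, Ideal.Quotient.eq]
    exact h1
  haveI hIntK : Algebra.IsIntegral K ((⨂[K] (_ : Fin n), A) ⧸ Q) := by
    refine ⟨fun x => ?_⟩
    obtain ⟨b, rfl⟩ := Ideal.Quotient.mk_surjective x
    obtain ⟨p, hpm, hpe⟩ := hIntD.isIntegral b
    refine ⟨p.map ρ.toRingHom, hpm.map _, ?_⟩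
    rw [Polynomial.eval₂_map]
    have hcomp : (algebraMap K ((⨂[K] (_ : Fin n), A) ⧸ Q)).comp ρ.toRingHom
        = (Ideal.Quotient.mk Q).comp (algebraMap D (⨂[K] (_ : Fin n), A)) := by
      refine RingHom.ext fun d => ?_
      show algebraMap K _ (ρ d) = Ideal.Quotient.mk Q d.1
      exact (hmkd d).symm
    rw [hcomp, ← Polynomial.hom_eval₂, hpe, map_zero]
  have hsurj : Function.Surjective (algebraMap K ((⨂[K] (_ : Fin n), A) ⧸ Q)) :=
    IsAlgClosed.algebraMap_bijective_of_isIntegral.2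
  have hinj : Function.Injective (algebraMap K ((⨂[K] (_ : Fin n), A) ⧸ Q)) :=
    (algebraMap K _).injective
  set e := RingEquiv.ofBijective (algebraMap K ((⨂[K] (_ : Fin n), A) ⧸ Q)) ⟨hinj, hsurj⟩
    with he
  let Ψ : (⨂[K] (_ : Fin n), A) →ₐ[K] K :=
    { toRingHom := (e.symm : ((⨂[K] (_ : Fin n), A) ⧸ Q) →+* K).comp (Ideal.Quotient.mk Q)
      commutes' := fun r => by
        show e.symm (Ideal.Quotient.mk Q (algebraMap K _ r)) = algebraMap K K r
        rw [Ideal.Quotient.mk_algebraMap, Algebra.algebraMap_self_apply]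
        have : algebraMap K ((⨂[K] (_ : Fin n), A) ⧸ Q) r = e r := rfl
        rw [this, RingEquiv.symm_apply_apply] }
  have hΨdiag : ∀ b : A, Ψ (tprod K (fun _ : Fin n => b)) = φ b := by
    intro b
    have h1 : Ψ (tprod K (fun _ : Fin n => b))
        = e.symm (Ideal.Quotient.mk Q ((⟨tprod K (fun _ : Fin n => b), hdiagmem b⟩ : D) : _)) :=
      rfl
    rw [h1, hmkd ⟨tprod K (fun _ : Fin n => b), hdiagmem b⟩]
    have h2 : ∀ c : K, e.symm (algebraMap K _ c) = c := fun c => by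
      have : algebraMap K ((⨂[K] (_ : Fin n), A) ⧸ Q) c = e c := rfl
      rw [this, RingEquiv.symm_apply_apply]
    rw [h2]
    show Λ (tprod K (fun _ : Fin n => b)) = φ b
    rw [hΛt, hGdiag]
  refine ⟨fun i => Ψ.comp (sA i), fun a => ?_⟩
  have h1 : ∀ i : Fin n, (Ψ.comp (sA i)) a = Ψ (sA i a) := fun i => rfl
  rw [Finset.prod_congr rfl (fun i _ => h1 i), ← map_prod, hprod_single (fun _ => a),
    hΨdiag a]

/-- Algebraic version: a nonzero multiplicative polynomial map `φ : A → K` on a finitely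
generated commutative unital algebra over an algebraically closed field of characteristic
zero satisfies `φ (z • 1) = z ^ n` and is a product of `n` algebra homomorphisms. -/
theorem stmt_2 {K A : Type*} [Field K] [IsAlgClosed K] [CharZero K]
    [CommRing A] [Algebra K A] [Algebra.FiniteType K A]
    (φ : A → K)
    (hpoly : ∃ (N : ℕ) (F : ∀ i : Fin (N + 1), MultilinearMap K (fun _ : Fin (i : ℕ) => A) K),
      ∀ a : A, φ a = ∑ i : Fin (N + 1), F i (fun _ => a))
    (hmul : ∀ a b : A, φ (a * b) = φ a * φ b)
    (hne : φ ≠ 0) :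
    ∃ n : ℕ, (∀ z : K, φ (z • (1 : A)) = z ^ n) ∧
      ∃ χ : Fin n → (A →ₐ[K] K), ∀ a : A, φ a = ∏ i, χ i a := by
  classical
  obtain ⟨N, F, hF⟩ := hpoly
  have hφ1 : φ 1 = 1 := by
    have h1 : φ 1 = φ 1 * φ 1 := by rw [← hmul, mul_one]
    have h2 : φ 1 * (φ 1 - 1) = 0 := by ring_nf; linear_combination -h1
    rcases mul_eq_zero.1 h2 with h0 | h0
    · exfalso
      apply hne
      funext a
      rw [show a = a * 1 by rw [mul_one], hmul, h0, mul_zero]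
      rfl
    · rw [sub_eq_zero] at h0
      exact h0
  set c : A → ℕ → K := fun a i => if h : i < N + 1 then F ⟨i, h⟩ (fun _ => a) else 0 with hc
  have hφsum : ∀ a, φ a = ∑ i ∈ Finset.range (N + 1), c a i := by
    intro a
    rw [hF a, ← Fin.sum_univ_eq_sum_range (fun i => c a i) (N + 1)]
    refine Finset.sum_congr rfl fun i _ => ?_
    show F i (fun _ => a) = if h : (i : ℕ) < N + 1 then F ⟨i, h⟩ (fun _ => a) else 0
    rw [dif_pos i.isLt]
  have hsm : ∀ (a : A) (z : K), φ (z • a) = ∑ i ∈ Finset.range (N + 1), c a i * z ^ i := by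
    intro a z
    rw [hF (z • a), ← Fin.sum_univ_eq_sum_range (fun i => c a i * z ^ i) (N + 1)]
    refine Finset.sum_congr rfl fun i _ => ?_
    have h2 := MultilinearMap.map_smul_univ (F i) (fun _ => z) (fun _ => a)
    have h3 : F i (fun _ => z • a) = (∏ _j : Fin (i : ℕ), z) • F i (fun _ => a) := h2
    rw [h3, Finset.prod_const, Finset.card_univ, Fintype.card_fin, smul_eq_mul, mul_comm]
    congr 1
    show F i (fun _ => a) = if h : (i : ℕ) < N + 1 then F ⟨i, h⟩ (fun _ => a) else 0
    rw [dif_pos i.isLt]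
  -- polynomial evaluation helper
  have hev : ∀ (f : ℕ → K) (z : K),
      Polynomial.eval z (∑ i ∈ Finset.range (N + 1), Polynomial.C (f i) * Polynomial.X ^ i)
      = ∑ i ∈ Finset.range (N + 1), f i * z ^ i := by
    intro f z
    rw [Polynomial.eval_finset_sum]
    refine Finset.sum_congr rfl fun i _ => ?_
    rw [Polynomial.eval_mul, Polynomial.eval_C, Polynomial.eval_pow, Polynomial.eval_X]
  set q : Polynomial K := ∑ i ∈ Finset.range (N + 1), Polynomial.C (c 1 i) * Polynomial.X ^ i
    with hqdef
  have hqeval : ∀ z : K, q.eval z = φ (z • 1) := by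
    intro z
    rw [hqdef, hev, ← hsm]
  have hsmul1 : ∀ z w : K, φ ((z * w) • 1) = φ (z • 1) * φ (w • 1) := by
    intro z w
    rw [← hmul]
    congr 1
    rw [smul_mul_assoc, one_mul, smul_smul]
  have hq1 : q.eval 1 = 1 := by rw [hqeval, one_smul, hφ1]
  have hqne : q ≠ 0 := fun h => by rw [h, Polynomial.eval_zero] at hq1; exact zero_ne_one hq1
  set n : ℕ := q.natDegree with hn
  have hqcn : q.coeff n ≠ 0 := Polynomial.leadingCoeff_ne_zero.2 hqne
  have hqco : ∀ k, q.coeff k = if k < N + 1 then c 1 k else 0 := coeff_range_sum (N + 1) _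
  have hnN : n < N + 1 := by
    by_contra h
    exact hqcn (by rw [hqco n, if_neg h])
  have hcne : c 1 n ≠ 0 := by
    have := hqco n
    rw [if_pos hnN] at this
    rw [← this]
    exact hqcn
  have hkey : ∀ w : K, c 1 n * w ^ n = q.eval w * q.coeff n := by
    intro w
    have hpoly2 : (∑ i ∈ Finset.range (N + 1), Polynomial.C (c 1 i * w ^ i) * Polynomial.X ^ i)
        = Polynomial.C (q.eval w) * q := by
      apply Polynomial.funext
      intro z
      rw [hev, Polynomial.eval_mul, Polynomial.eval_C, hqeval, hqeval, ← hsmul1, hsm 1 (w * z)]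
      refine Finset.sum_congr rfl fun i _ => ?_
      rw [mul_pow, mul_assoc]
    have hco := congrArg (fun p => Polynomial.coeff p n) hpoly2
    simp only [coeff_range_sum, Polynomial.coeff_C_mul] at hco
    rw [if_pos hnN] at hco
    exact hco
  have heval : ∀ w : K, q.eval w = w ^ n := by
    intro w
    have h1 := hkey w
    rw [hqco n, if_pos hnN, mul_comm (q.eval w)] at h1
    exact (mul_left_cancel₀ hcne h1).symm
  have hzn : ∀ z : K, φ (z • (1 : A)) = z ^ n := by
    intro z
    rw [← hqeval, heval]
  have hhom : ∀ (z : K) (a : A), φ (z • a) = z ^ n * φ a := by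
    intro z a
    rw [show z • a = (z • (1 : A)) * a by rw [smul_mul_assoc, one_mul], hmul, hzn]
  have hcomp : ∀ a, c a n = φ a := by
    intro a
    have hp3 : (∑ i ∈ Finset.range (N + 1), Polynomial.C (c a i) * Polynomial.X ^ i)
        = Polynomial.C (φ a) * Polynomial.X ^ n := by
      apply Polynomial.funext
      intro z
      rw [hev, ← hsm, Polynomial.eval_mul, Polynomial.eval_C, Polynomial.eval_pow,
        Polynomial.eval_X, hhom, mul_comm]
    have hco := congrArg (fun p => Polynomial.coeff p n) hp3
    simp only [coeff_range_sum, Polynomial.coeff_C_mul, Polynomial.coeff_X_pow] at hco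
    rw [if_pos hnN] at hco
    simpa using hco
  have hFn : ∀ a : A, F ⟨n, hnN⟩ (fun _ => a) = φ a := by
    intro a
    have h1 := hcomp a
    simp only [hc] at h1
    rw [dif_pos hnN] at h1
    exact h1
  -- symmetrization
  set Fn : MultilinearMap K (fun _ : Fin n => A) K := F ⟨n, hnN⟩ with hFndef
  set G : MultilinearMap K (fun _ : Fin n => A) K :=
    ((n.factorial : K))⁻¹ • ∑ σ : Equiv.Perm (Fin n), MultilinearMap.domDomCongr σ Fn with hG
  have hfac : ((n.factorial : K)) ≠ 0 := Nat.cast_ne_zero.2 n.factorial_ne_zero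
  have hGapp : ∀ v : Fin n → A,
      G v = (n.factorial : K)⁻¹ * ∑ σ : Equiv.Perm (Fin n), Fn (fun i => v (σ i)) := by
    intro v
    rw [hG, MultilinearMap.smul_apply, MultilinearMap.sum_apply, smul_eq_mul]
    rfl
  have hGdiag : ∀ a : A, G (fun _ => a) = φ a := by
    intro a
    rw [hGapp]
    have h1 : ∀ σ : Equiv.Perm (Fin n), Fn (fun _ => a) = φ a := fun σ => hFn a
    rw [Finset.sum_congr rfl (fun σ _ => h1 σ), Finset.sum_const, Finset.card_univ,
      Fintype.card_perm, Fintype.card_fin, nsmul_eq_mul, ← mul_assoc,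
      inv_mul_cancel₀ hfac, one_mul]
  have hGsymm : ∀ (τ : Equiv.Perm (Fin n)) (v : Fin n → A), G (fun i => v (τ i)) = G v := by
    intro τ v
    rw [hGapp, hGapp]
    congr 1
    have h1 : ∀ σ : Equiv.Perm (Fin n), (Fn fun i => v (τ (σ i))) = Fn fun i => v ((τ * σ) i) :=
      fun σ => rfl
    rw [Finset.sum_congr rfl (fun σ _ => h1 σ)]
    exact Equiv.sum_comp (Equiv.mulLeft τ) (fun σ => Fn fun i => v (σ i))
  have hstar : ∀ (b : A) (v : Fin n → A), G (fun i => v i * b) = G v * φ b := by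
    intro b v
    set L : MultilinearMap K (fun _ : Fin n => A) K :=
      G.compLinearMap (fun _ : Fin n => LinearMap.mulRight K b) - φ b • G with hL
    have hLapp : ∀ w : Fin n → A, L w = G (fun i => w i * b) - φ b * G w := fun w => rfl
    have hLs : ∀ (σ : Equiv.Perm (Fin n)) (w : Fin n → A), L (fun i => w (σ i)) = L w := by
      intro σ w
      rw [hLapp, hLapp]
      have h1 : G (fun i => w (σ i) * b) = G (fun i => w i * b) :=
        hGsymm σ (fun j => w j * b)
      rw [h1, hGsymm σ w]
    have hLd : ∀ a : A, L (fun _ => a) = 0 := by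
      intro a
      rw [hLapp]
      have h1 : G (fun _ : Fin n => a * b) = φ (a * b) := hGdiag (a * b)
      rw [h1, hGdiag a, hmul, mul_comm (φ a), sub_self]
    have h2 := symm_diag_zero L hLs hLd v
    rw [hLapp, sub_eq_zero] at h2
    rw [h2, mul_comm]
  exact ⟨n, hzn, exists_chars φ G hGdiag hstar hφ1⟩
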